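/- Let S be a stable cut in a graph G with a unique critical vertex u∈S, and let w∉S be a vertex with x_S(w)=0 (i.e., d_S(w)=d(w)/2). Then φ(S⊕w) ≥ φ(S). -/
import Mathlib


open Finset

noncomputable section

variable {V : Type*} [Fintype V] [DecidableEq V]

/-- Total weight of edges crossing the cut `S` (each unordered crossing edge counted once). -/
def cutW (w : V → V → ℝ) (S : Finset V) : ℝ :=
  ∑ u ∈ S, ∑ v ∈ Sᶜ, w u v

/-- Weighted degree of a vertex. -/
def degW (w : V → V → ℝ) (v : V) : ℝ := ∑ u, w v u

/-- Total weight of crossing edges incident to `v`. -/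
def crossDegW (w : V → V → ℝ) (S : Finset V) (v : V) : ℝ :=
  ∑ u, if (v ∈ S ∧ u ∉ S) ∨ (u ∈ S ∧ v ∉ S) then w v u else 0

/-- Total weight of crossing edges incident to at least one vertex of `F`. -/
def crossDegSetW (w : V → V → ℝ) (S F : Finset V) : ℝ :=
  ∑ u ∈ S, ∑ v ∈ Sᶜ, if u ∈ F ∨ v ∈ F then w u v else 0

/-- Weight of edges crossing `S` that avoid `F`: the cut `S − F` in `G − F`. -/
def cutMinusW (w : V → V → ℝ) (S F : Finset V) : ℝ :=
  ∑ u ∈ S, ∑ v ∈ Sᶜ, if u ∉ F ∧ v ∉ F then w u v else 0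

/-- The cut obtained from `S` by moving `v` to the opposite side. -/
def flipCut (S : Finset V) (v : V) : Finset V :=
  if v ∈ S then S.erase v else insert v S

/-- The k-fault-tolerant value of the cut `S` against an adaptive adversary. -/
noncomputable def ftValW (w : V → V → ℝ) (S : Finset V) (k : ℕ) : ℝ :=
  sInf ((fun F => cutMinusW w S F) '' {F : Finset V | F.card = k})

/-- The single-fault FT value of the cut `S`. -/
noncomputable def ft1W (w : V → V → ℝ) (S : Finset V) : ℝ :=
  sInf (Set.range fun v => cutMinusW w S {v})

/-- Total edge weight of the graph. -/
def totalW (w : V → V → ℝ) : ℝ := (∑ u, ∑ v, w u v) / 2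

/-- Maximum weighted degree. -/
noncomputable def maxDegW (w : V → V → ℝ) : ℝ := sSup (Set.range (degW w))

lemma sum01_nat (t : V → ℝ) (h : ∀ q, t q = 0 ∨ t q = 1) :
    ∃ n : ℕ, ∑ q, t q = (n : ℝ) := by
  classical
  have key : ∀ s : Finset V, ∃ n : ℕ, ∑ q ∈ s, t q = (n : ℝ) := by
    intro s
    induction s using Finset.cons_induction with
    | empty => exact ⟨0, by simp⟩
    | cons a s ha ih =>
      obtain ⟨n, hn⟩ := ih
      rcases h a with h0 | h1
      · exact ⟨n, by rw [Finset.sum_cons, h0, hn]; ring⟩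
      · exact ⟨n + 1, by rw [Finset.sum_cons, h1, hn]; push_cast; ring⟩
  exact key univ

lemma crossDeg_nat (w : V → V → ℝ) (h01 : ∀ u v, w u v = 0 ∨ w u v = 1)
    (S : Finset V) (v : V) : ∃ n : ℕ, crossDegW w S v = (n : ℝ) := by
  apply sum01_nat
  intro q
  by_cases hc : (v ∈ S ∧ q ∉ S) ∨ (q ∈ S ∧ v ∉ S)
  · simpa [hc] using h01 v q
  · simp [hc]

lemma crossDeg_in (w : V → V → ℝ) (S : Finset V) {a : V} (ha : a ∈ S) :
    crossDegW w S a = ∑ q ∈ Sᶜ, w a q := by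
  rw [crossDegW]
  rw [← Finset.sum_filter]
  congr 1
  ext q
  simp [ha]

lemma crossDeg_out (w : V → V → ℝ) (S : Finset V) {a : V} (ha : a ∉ S) :
    crossDegW w S a = ∑ q ∈ S, w a q := by
  rw [crossDegW]
  rw [← Finset.sum_filter]
  congr 1
  ext q
  simp [ha]

lemma cutMinus_single (w : V → V → ℝ) (hsym : ∀ u v, w u v = w v u)
    (S : Finset V) (a : V) :
    cutMinusW w S {a} = cutW w S - crossDegW w S a := by
  classical
  have hsplit : cutW w S = cutMinusW w S {a} +
      ∑ p ∈ S, ∑ q ∈ Sᶜ, (if p = a ∨ q = a then w p q else 0) := by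
    rw [cutW, cutMinusW, ← Finset.sum_add_distrib]
    apply Finset.sum_congr rfl
    intro p _
    rw [← Finset.sum_add_distrib]
    apply Finset.sum_congr rfl
    intro q _
    simp only [Finset.mem_singleton]
    by_cases hp : p = a
    · simp [hp]
    · by_cases hq : q = a
      · simp [hp, hq]
      · simp [hp, hq]
  have hrest : ∑ p ∈ S, ∑ q ∈ Sᶜ, (if p = a ∨ q = a then w p q else 0)
      = crossDegW w S a := by
    by_cases ha : a ∈ S
    · have haC : a ∉ Sᶜ := by simp [ha]
      rw [crossDeg_in w S ha]
      rw [Finset.sum_eq_single_of_mem a ha]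
      · apply Finset.sum_congr rfl
        intro q hq
        have : q ≠ a := by rintro rfl; exact haC hq
        simp [this]
      · intro p _ hpa
        apply Finset.sum_eq_zero
        intro q hq
        have : q ≠ a := by rintro rfl; exact haC hq
        simp [hpa, this]
    · have haC : a ∈ Sᶜ := Finset.mem_compl.mpr ha
      rw [crossDeg_out w S ha]
      have step : ∀ p ∈ S, ∑ q ∈ Sᶜ, (if p = a ∨ q = a then w p q else 0) = w p a := by
        intro p hp
        have hpa : p ≠ a := by rintro rfl; exact ha hp
        rw [Finset.sum_eq_single_of_mem a haC]
        · simp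
        · intro q _ hqa
          simp [hpa, hqa]
      rw [Finset.sum_congr rfl step]
      apply Finset.sum_congr rfl
      intro p _
      exact hsym p a
  linarith

lemma cut_flip_eq (w : V → V → ℝ) (hsym : ∀ u v, w u v = w v u)
    (hdiag : ∀ v, w v v = 0) (S : Finset V) {x : V} (hx : x ∉ S) :
    cutW w (insert x S) = cutW w S + degW w x - 2 * crossDegW w S x := by
  classical
  have hc : (insert x S)ᶜ = Sᶜ.erase x := by
    ext q
    simp [Finset.mem_erase, and_comm, not_or]
  have hxC : x ∈ Sᶜ := Finset.mem_compl.mpr hx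
  rw [cutW, Finset.sum_insert hx, hc]
  have h1 : ∑ q ∈ Sᶜ.erase x, w x q = ∑ q ∈ Sᶜ, w x q := by
    rw [Finset.sum_erase_eq_sub hxC, hdiag x, sub_zero]
  have h2 : ∀ p ∈ S, ∑ q ∈ Sᶜ.erase x, w p q = (∑ q ∈ Sᶜ, w p q) - w p x := by
    intro p _
    rw [Finset.sum_erase_eq_sub hxC]
  rw [h1, Finset.sum_congr rfl h2, Finset.sum_sub_distrib]
  have h3 : ∑ q ∈ S, w x q + ∑ q ∈ Sᶜ, w x q = degW w x :=
    Finset.sum_add_sum_compl S (fun q => w x q)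
  have h4 : crossDegW w S x = ∑ q ∈ S, w x q := crossDeg_out w S hx
  have h5 : ∑ p ∈ S, w p x = ∑ q ∈ S, w x q :=
    Finset.sum_congr rfl (fun p _ => hsym p x)
  rw [cutW]
  linarith

theorem stmt_9 (w : V → V → ℝ) (hsym : ∀ u v, w u v = w v u)
    (h01 : ∀ u v, w u v = 0 ∨ w u v = 1) (hdiag : ∀ v, w v v = 0)
    (S : Finset V)
    (hstable : ∀ v, (degW w v - 1) / 2 < crossDegW w S v)
    (u : V) (hu : u ∈ S) (hcrit : cutMinusW w S {u} = ft1W w S)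
    (huniq : ∀ v : V, v ≠ u → crossDegW w S v < crossDegW w S u)
    (x : V) (hx : x ∉ S) (hxcross : crossDegW w S x = degW w x / 2) :
    ft1W w S ≤ ft1W w (flipCut S x) := by
  classical
  have hxu : x ≠ u := by rintro rfl; exact hx hu
  have hTdef : flipCut S x = insert x S := by simp [flipCut, hx]
  rw [hTdef, ← hcrit, ft1W]
  apply le_csInf ⟨_, Set.mem_range_self x⟩
  rintro b ⟨v, rfl⟩
  show cutMinusW w S {u} ≤ cutMinusW w (insert x S) {v}
  rw [cutMinus_single w hsym, cutMinus_single w hsym]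
  have hcutT : cutW w (insert x S) = cutW w S := by
    rw [cut_flip_eq w hsym hdiag S hx]
    linarith [hxcross]
  rw [hcutT]
  have hwle : ∀ p q, w p q ≤ 1 := by
    intro p q; rcases h01 p q with h | h <;> simp [h]
  have hwnn : ∀ p q, 0 ≤ w p q := by
    intro p q; rcases h01 p q with h | h <;> simp [h]
  have hxT : x ∈ insert x S := Finset.mem_insert_self x S
  have key : crossDegW w (insert x S) v ≤ crossDegW w S u := by
    by_cases hvS : v ∈ S
    · -- v ∈ S : crossDeg can only decrease
      have hle : crossDegW w (insert x S) v ≤ crossDegW w S v := by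
        rw [crossDegW, crossDegW]
        apply Finset.sum_le_sum
        intro q _
        have hvT : v ∈ insert x S := Finset.mem_insert_of_mem hvS
        by_cases hcT : (v ∈ insert x S ∧ q ∉ insert x S) ∨ (q ∈ insert x S ∧ v ∉ insert x S)
        · have hq : q ∉ S := by
            rcases hcT with ⟨_, hq⟩ | ⟨_, hv⟩
            · intro hqS; exact hq (Finset.mem_insert_of_mem hqS)
            · exact absurd hvT hv
          simp only [hcT, if_true, hvS, hq]
          simp
        · simp only [hcT, if_false]
          by_cases hcS : (v ∈ S ∧ q ∉ S) ∨ (q ∈ S ∧ v ∉ S)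
          · simp [hcS, hwnn v q]
          · simp [hcS]
      by_cases hvu : v = u
      · subst hvu; exact hle
      · exact le_of_lt (lt_of_le_of_lt hle (huniq v hvu))
    · by_cases hvx : v = x
      · -- v = x : crossDeg unchanged
        rw [hvx]
        have heq : crossDegW w (insert x S) x = ∑ q, (if q ∉ S then w x q else 0) := by
          rw [crossDegW]
          apply Finset.sum_congr rfl
          intro q _
          by_cases hqx : q = x
          · rw [hqx]
            simp [hdiag, hx]
          · by_cases hqS : q ∈ S
            · simp [hqS, hxT, Finset.mem_insert_of_mem hqS]
            · have hqT : q ∉ insert x S := by simp [hqx, hqS]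
              simp [hqS, hxT, hqT]
        have hsum : (∑ q, (if q ∉ S then w x q else 0)) + crossDegW w S x = degW w x := by
          rw [crossDegW, degW, ← Finset.sum_add_distrib]
          apply Finset.sum_congr rfl
          intro q _
          by_cases hqS : q ∈ S <;> simp [hqS, hx]
        have : crossDegW w (insert x S) x = crossDegW w S x := by
          rw [heq]; linarith [hxcross]
        rw [this]
        exact le_of_lt (huniq x hxu)
      · -- v ∉ S, v ≠ x : crossDeg increases by w v x ≤ 1
        have hvT : v ∉ insert x S := by simp [hvx, hvS]
        have heq : crossDegW w (insert x S) v = crossDegW w S v + w v x := by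
          rw [crossDegW, crossDegW]
          calc ∑ q, (if (v ∈ insert x S ∧ q ∉ insert x S) ∨ (q ∈ insert x S ∧ v ∉ insert x S)
                  then w v q else 0)
              = ∑ q, ((if (v ∈ S ∧ q ∉ S) ∨ (q ∈ S ∧ v ∉ S) then w v q else 0)
                  + (if q = x then w v q else 0)) := by
                apply Finset.sum_congr rfl
                intro q _
                by_cases hqx : q = x
                · subst hqx
                  simp [hvT, hxT, hvS, hx]
                · by_cases hqS : q ∈ S
                  · simp [hqS, hvT, hvS, Finset.mem_insert_of_mem hqS, hqx]
                  · have : q ∉ insert x S := by simp [hqx, hqS]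
                    simp [hqS, hvS, this, hqx, hvT]
            _ = crossDegW w S v + w v x := by
                rw [Finset.sum_add_distrib, crossDegW, Finset.sum_ite_eq' univ x (fun q => w v q)]
                simp
        obtain ⟨m, hm⟩ := crossDeg_nat w h01 S v
        obtain ⟨n, hn⟩ := crossDeg_nat w h01 S u
        have hmn : m < n := by
          have := huniq v (by rintro rfl; exact hx (hvS.elim hu))
          · exact_mod_cast hm ▸ hn ▸ huniq v (by rintro rfl; exact hvS hu)
        have : (m : ℝ) + 1 ≤ (n : ℝ) := by exact_mod_cast Nat.succ_le_of_lt hmn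
        rw [heq, hm, hn]
        have := hwle v x
        linarith
  linarith
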